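/- Let q and s be integers with 2 < q < s and gcd(q,s) = 1, let k be an integer, let ρ ≥ 0 be a real number, and let α ∈ (0,1) with β := 1 − α. If sin(πk/q) ≠ 0 (equivalently, the imaginary part of e^{πik/q} is nonzero), then (ρ e^{πik/q})^s − β (ρ e^{πik/q})^{s−q} − α ≠ 0. -/

import Mathlib

/-- Forbidden rays for the Type I reduced Ito polynomial `P^I_α(t) = t^s − β t^{s−q} − α`:
if `sin(πk/q) ≠ 0`, then no point `ρ e^{πik/q}` on the corresponding ray is a zero. -/
theorem forbidden_ray_q (q s : ℕ) (hq : 2 < q) (hqs : q < s) (hco : Nat.Coprime q s)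
    (k : ℤ) (ρ : ℝ) (hρ : 0 ≤ ρ) (α : ℝ) (hα : α ∈ Set.Ioo (0 : ℝ) 1)
    (hsin : Real.sin (Real.pi * (k : ℝ) / (q : ℝ)) ≠ 0) :
    ((ρ : ℂ) * Complex.exp (Real.pi * Complex.I * (k : ℂ) / (q : ℂ))) ^ s -
        ((1 : ℂ) - (α : ℂ)) *
          ((ρ : ℂ) * Complex.exp (Real.pi * Complex.I * (k : ℂ) / (q : ℂ))) ^ (s - q) -
        (α : ℂ) ≠ 0 := by
  obtain ⟨hα0, hα1⟩ := hα
  have hq0 : (0:ℝ) < (q:ℝ) := by positivity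
  set θ : ℝ := Real.pi * (k : ℝ) / (q : ℝ) with hθdef
  intro h
  have hexp : Complex.exp (Real.pi * Complex.I * (k : ℂ) / (q : ℂ))
      = Complex.exp ((θ : ℂ) * Complex.I) := by
    congr 1
    rw [hθdef]
    push_cast
    ring
  rw [hexp] at h
  have hz : ∀ n : ℕ, ((ρ:ℂ) * Complex.exp ((θ:ℂ) * Complex.I)) ^ n
      = ((ρ ^ n : ℝ) : ℂ) * Complex.exp (((n * θ : ℝ) : ℂ) * Complex.I) := by
    intro n
    rw [mul_pow, ← Complex.exp_nat_mul]
    push_cast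
    ring_nf
  rw [hz s, hz (s - q)] at h
  -- extract real and imaginary parts
  have hIm := congrArg Complex.im h
  have hRe := congrArg Complex.re h
  simp only [Complex.sub_im, Complex.sub_re, Complex.mul_im, Complex.mul_re,
    Complex.ofReal_re, Complex.ofReal_im, Complex.exp_ofReal_mul_I_re,
    Complex.exp_ofReal_mul_I_im, Complex.zero_im, Complex.zero_re, Complex.one_re,
    Complex.one_im, zero_mul, mul_zero, sub_zero, zero_sub, add_zero, zero_add] at hIm hRe
  -- key angle identities
  have hqθ : (q : ℝ) * θ = k * Real.pi := by
    rw [hθdef]; field_simp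
  have hsub : ((s - q : ℕ) : ℝ) * θ = (s : ℝ) * θ - (k : ℝ) * Real.pi := by
    rw [Nat.cast_sub hqs.le, sub_mul, hqθ]
  have hsinsub : Real.sin (((s - q : ℕ) : ℝ) * θ) = (-1 : ℝ) ^ k * Real.sin ((s:ℝ) * θ) := by
    rw [hsub, ← neg_sub ((k:ℝ) * Real.pi), Real.sin_neg, Real.sin_int_mul_pi_sub]
    ring
  have hcossub : Real.cos (((s - q : ℕ) : ℝ) * θ) = (-1 : ℝ) ^ k * Real.cos ((s:ℝ) * θ) := by
    rw [hsub, ← neg_sub ((k:ℝ) * Real.pi), Real.cos_neg, Real.cos_int_mul_pi_sub]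
  -- sin(sθ) ≠ 0
  have hsins : Real.sin ((s:ℝ) * θ) ≠ 0 := by
    intro h0
    rw [Real.sin_eq_zero_iff] at h0
    obtain ⟨n, hn⟩ := h0
    apply hsin
    have hks : (k * s : ℝ) = (n : ℝ) * q := by
      have hpi : Real.pi ≠ 0 := Real.pi_ne_zero
      have hpiq : Real.pi * ((k:ℝ) * s) = Real.pi * ((n:ℝ) * q) := by
        rw [hθdef] at hn
        field_simp at hn
        linear_combination (-Real.pi) * hn
      have := mul_left_cancel₀ hpi hpiq
      linarith
    have hks' : k * (s : ℤ) = n * (q : ℤ) := by exact_mod_cast hks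
    have hdvd : (q : ℤ) ∣ k := by
      have hd : (q : ℤ) ∣ k * (s : ℤ) := ⟨n, by linarith [hks']⟩
      exact (Nat.isCoprime_iff_coprime.mpr hco).dvd_of_dvd_mul_right hd
    obtain ⟨m, hm⟩ := hdvd
    rw [hθdef, hm]
    push_cast
    rw [show Real.pi * ((q:ℝ) * (m:ℝ)) / (q:ℝ) = (m:ℝ) * Real.pi by field_simp]
    exact Real.sin_int_mul_pi m
  rw [hsinsub] at hIm
  rw [hcossub] at hRe
  have hfac : (ρ ^ s - (-1:ℝ) ^ k * ((1 - α) * ρ ^ (s - q))) * Real.sin ((s:ℝ) * θ) = 0 := by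
    linear_combination hIm
  have hE : ρ ^ s - (-1:ℝ) ^ k * ((1 - α) * ρ ^ (s - q)) = 0 :=
    (mul_eq_zero.mp hfac).resolve_right hsins
  have hα' : α = 0 := by
    linear_combination -hRe + Real.cos ((s:ℝ) * θ) * hE
  linarith
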